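/- Let ψ be a d-monotone function on (0,∞) (for d ≥ 2) with ψ(0)=1 and ψ(x)→0 as x→∞, and suppose ψ is regularly varying at infinity with index −α for some α > 0. Then for each k = 0,1,...,d−1, the function x ↦ (−1)^k x^k ψ^{(k)}(x) is asymptotically equivalent to c_k ψ(x) as x→∞, where c_0 = 1 and c_k = ∏_{j=0}^{k−1}(j+α). -/

import Mathlib

open Filter Set intervalIntegral
open Topology MeasureTheory

lemma measurable_of_rightCont (g : ℝ → ℝ) (hrc : ∀ x : ℝ, ContinuousWithinAt g (Ici x) x) :
    Measurable g := by
  have key : ∀ x : ℝ, Tendsto (fun n : ℕ => g ((⌈x * (n+1 : ℝ)⌉ : ℤ) / (n+1 : ℝ))) atTop (𝓝 (g x)) := by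
    intro x
    have h1 : Tendsto (fun n : ℕ => ((⌈x * (n+1 : ℝ)⌉ : ℤ) : ℝ) / (n+1 : ℝ)) atTop (𝓝[Ici x] x) := by
      apply tendsto_nhdsWithin_of_tendsto_nhds_of_eventually_within
      · have hup : ∀ n : ℕ, ((⌈x * (n+1 : ℝ)⌉ : ℤ) : ℝ) / (n+1 : ℝ) ≤ x + 1/(n+1 : ℝ) := by
          intro n
          have hn : (0:ℝ) < n + 1 := by positivity
          rw [div_le_iff₀ hn]
          have h := Int.ceil_lt_add_one (x * (n+1 : ℝ))
          have h2 : (1/(n+1:ℝ))*(n+1) = 1 := by field_simp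
          nlinarith
        have hlo : ∀ n : ℕ, x ≤ ((⌈x * (n+1 : ℝ)⌉ : ℤ) : ℝ) / (n+1 : ℝ) := by
          intro n
          have hn : (0:ℝ) < n + 1 := by positivity
          rw [le_div_iff₀ hn]
          exact Int.le_ceil _
        have h2 : Tendsto (fun n : ℕ => x + 1/(n+1 : ℝ)) atTop (𝓝 x) := by
          have := tendsto_one_div_add_atTop_nhds_zero_nat (𝕜 := ℝ)
          simpa using tendsto_const_nhds.add this
        exact tendsto_of_tendsto_of_tendsto_of_le_of_le tendsto_const_nhds h2 hlo hup
      · filter_upwards with n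
        have hn : (0:ℝ) < n + 1 := by positivity
        rw [mem_Ici, le_div_iff₀ hn]
        exact Int.le_ceil _
    exact (hrc x).tendsto.comp h1
  apply measurable_of_tendsto_metrizable (f := fun n x => g ((⌈x * (n+1 : ℝ)⌉ : ℤ) / (n+1 : ℝ)))
  · intro n
    have : (fun x : ℝ => g ((⌈x * (n+1 : ℝ)⌉ : ℤ) / (n+1 : ℝ)))
        = (fun m : ℤ => g (m / (n+1 : ℝ))) ∘ (fun x : ℝ => ⌈x * (n+1 : ℝ)⌉) := rfl
    rw [this]
    exact (measurable_of_countable _).comp (Int.measurable_ceil.comp (measurable_id.mul_const _))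
  · exact tendsto_pi_nhds.2 key

lemma slope_tendsto_of_rc (h F : ℝ → ℝ) (x : ℝ) (hx : (1:ℝ) ≤ x)
    (hmeas : Measurable fun t => h (max t 1))
    (hrc : ContinuousWithinAt h (Ici x) x)
    (hint : ∀ y, x ≤ y → F y - F x = ∫ t in x..y, h t) :
    Tendsto (fun t => (F t - F x)/(t - x)) (𝓝[>] x) (𝓝 (h x)) := by
  rw [Metric.tendsto_nhds]
  intro ε hε
  have hS : {t | dist (h t) (h x) < ε/2} ∈ 𝓝[Ici x] x :=
    hrc.tendsto (Metric.ball_mem_nhds _ (by linarith))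
  rw [Metric.mem_nhdsWithin_iff] at hS
  obtain ⟨η, hη, hball⟩ := hS
  filter_upwards [Ioo_mem_nhdsGT (lt_add_of_pos_right x (lt_min hη one_pos))]
  intro t ht
  obtain ⟨hxt, htup⟩ := ht
  have htx : t - x > 0 := by linarith
  have hbound : ∀ s ∈ Icc x t, |h s - h x| ≤ ε/2 := by
    intro s hs
    have : s ∈ Metric.ball x η ∩ Ici x := by
      constructor
      · rw [Metric.mem_ball, Real.dist_eq, abs_lt]
        have h5 := min_le_left η 1
        constructor <;> [linarith [hs.1]; linarith [hs.2]]
      · exact hs.1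
    have := hball this
    rw [mem_setOf_eq, Real.dist_eq] at this
    linarith [this]
  -- integrability of h on [x, t]
  have hEq : EqOn h (fun s => h (max s 1)) (Set.uIoc x t) := by
    intro s hs
    rw [uIoc_of_le hxt.le] at hs
    simp only [max_eq_left (le_trans hx hs.1.le)]
  have hI : IntervalIntegrable h volume x t := by
    rw [intervalIntegrable_iff]
    apply (IntegrableOn.congr_fun _ hEq.symm measurableSet_uIoc)
    haveI : IsFiniteMeasure (volume.restrict (Set.uIoc x t)) := by
      constructor
      rw [Measure.restrict_apply_univ, uIoc_of_le hxt.le, Real.volume_Ioc]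
      exact ENNReal.ofReal_lt_top
    constructor
    · exact hmeas.aestronglyMeasurable.restrict
    · apply MeasureTheory.HasFiniteIntegral.of_bounded (C := |h x| + ε/2)
      · apply ae_restrict_of_forall_mem measurableSet_uIoc
        intro s hs
        have hs' : s ∈ Icc x t := by
          rw [uIoc_of_le hxt.le] at hs; exact ⟨hs.1.le, hs.2⟩
        have h1 := hbound s hs'
        have : max s 1 = s := max_eq_left (le_trans hx hs'.1)
        rw [this]
        calc ‖h s‖ = |h s - h x + h x| := by rw [Real.norm_eq_abs]; ring_nf
          _ ≤ |h s - h x| + |h x| := abs_add_le _ _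
          _ ≤ |h x| + ε/2 := by linarith
  have key : F t - F x = ∫ s in x..t, h s := hint t hxt.le
  have hsub : (∫ s in x..t, h s) - (t - x) * h x = ∫ s in x..t, (h s - h x) := by
    rw [intervalIntegral.integral_sub hI (intervalIntegrable_const)]
    simp [mul_comm]
  have hnorm : |∫ s in x..t, (h s - h x)| ≤ (ε/2) * |t - x| := by
    rw [← Real.norm_eq_abs]
    apply intervalIntegral.norm_integral_le_of_norm_le_const
    intro s hs
    rw [uIoc_of_le hxt.le] at hs
    rw [Real.norm_eq_abs]
    exact hbound s ⟨hs.1.le, hs.2⟩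
  rw [Real.dist_eq]
  have : (F t - F x)/(t - x) - h x = (∫ s in x..t, (h s - h x))/(t - x) := by
    rw [key, ← hsub]; field_simp
  rw [this, abs_div, abs_of_pos htx]
  rw [abs_of_pos htx] at hnorm
  rw [div_lt_iff₀ htx]
  calc |∫ s in x..t, (h s - h x)| ≤ (ε/2) * (t - x) := hnorm
    _ < ε * (t - x) := by nlinarith

lemma tendsto_Lfun (β : ℝ) :
    Tendsto (fun b : ℝ => (1 - b ^ (-β))/(b - 1)) (𝓝[>] (1:ℝ)) (𝓝 β) := by
  have hD : HasDerivAt (fun b : ℝ => b ^ (-β)) (-β) 1 := by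
    have := Real.hasDerivAt_rpow_const (x := (1:ℝ)) (p := -β) (Or.inl one_ne_zero)
    simpa using this
  have hS := hasDerivAt_iff_tendsto_slope.1 hD
  have hmono : 𝓝[>] (1:ℝ) ≤ 𝓝[≠] (1:ℝ) :=
    nhdsWithin_mono 1 (fun y hy => ne_of_gt hy)
  have := (hS.mono_left hmono).neg
  rw [neg_neg] at this
  apply this.congr
  intro b
  rw [slope_def_field]
  rw [Real.one_rpow]
  ring

lemma tendsto_Ufun (β : ℝ) :
    Tendsto (fun b : ℝ => b * ((b ^ β - 1)/(b - 1))) (𝓝[>] (1:ℝ)) (𝓝 β) := by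
  have hD : HasDerivAt (fun b : ℝ => b ^ β) β 1 := by
    have := Real.hasDerivAt_rpow_const (x := (1:ℝ)) (p := β) (Or.inl one_ne_zero)
    simpa using this
  have hS := hasDerivAt_iff_tendsto_slope.1 hD
  have hmono : 𝓝[>] (1:ℝ) ≤ 𝓝[≠] (1:ℝ) :=
    nhdsWithin_mono 1 (fun y hy => ne_of_gt hy)
  have h2 : Tendsto (fun b : ℝ => (b ^ β - 1)/(b - 1)) (𝓝[>] (1:ℝ)) (𝓝 β) := by
    apply (hS.mono_left hmono).congr
    intro b
    rw [slope_def_field, Real.one_rpow]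
  have h1 : Tendsto (fun b : ℝ => b) (𝓝[>] (1:ℝ)) (𝓝 (1:ℝ)) :=
    (continuous_id.tendsto 1).mono_left nhdsWithin_le_nhds
  simpa using h1.mul h2

lemma monotone_density_core (fk u : ℝ → ℝ) (β : ℝ) (hβ : 0 < β)
    (hI : ∀ x y : ℝ, 1 ≤ x → x ≤ y → (y - x) * u y ≤ fk x - fk y ∧ fk x - fk y ≤ (y - x) * u x)
    (hpos : ∀ᶠ x in atTop, 0 < fk x)
    (hrat : ∀ c : ℝ, 0 < c → Tendsto (fun x => fk (c * x) / fk x) atTop (𝓝 (c ^ (-β)))) :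
    Tendsto (fun x => x * u x / fk x) atTop (𝓝 β) := by
  rw [tendsto_order]
  constructor
  · intro l hl
    obtain ⟨b, hbl, hb1⟩ :=
      (((tendsto_order.1 (tendsto_Lfun β)).1 l hl).and self_mem_nhdsWithin).exists
    have hb0 : (0:ℝ) < b := by linarith
    have hbx : Tendsto (fun x : ℝ => b * x) atTop atTop :=
      Tendsto.const_mul_atTop hb0 tendsto_id
    have hratb := (tendsto_order.1 (hrat b hb0)).2 (1 - l*(b-1)) (by
      rw [lt_div_iff₀ (by linarith : (0:ℝ) < b - 1)] at hbl
      linarith)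
    filter_upwards [hpos, hbx.eventually hpos, eventually_ge_atTop (1:ℝ), hratb]
    intro x hfk hfkb hx1 hrx
    have hxb : x ≤ b * x := by nlinarith
    have h7 := (hI x (b*x) hx1 hxb).2
    have h8 : fk (b*x) < (1 - l*(b-1)) * fk x := (div_lt_iff₀ hfk).1 hrx
    rw [lt_div_iff₀ hfk]
    nlinarith
  · intro m hm
    obtain ⟨b, hbm, hb1⟩ :=
      (((tendsto_order.1 (tendsto_Ufun β)).2 m hm).and self_mem_nhdsWithin).exists
    have hb0 : (0:ℝ) < b := by linarith
    set B : ℝ := m*(b-1)/b + 1 with hB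
    have hBgt : b ^ β < B := by
      have hb1' : (0:ℝ) < b - 1 := by linarith
      rw [mul_div_assoc'] at hbm
      have h1 := (div_lt_iff₀ hb1').1 hbm
      have h2 : b ^ β - 1 < m*(b-1)/b := by rw [lt_div_iff₀ hb0]; nlinarith
      rw [hB]; linarith
    have hbinv : (0:ℝ) < b⁻¹ := by positivity
    have hval : (b⁻¹ : ℝ) ^ (-β) = b ^ β := by
      rw [Real.inv_rpow hb0.le, Real.rpow_neg hb0.le, inv_inv]
    have hratb := (tendsto_order.1 (hrat b⁻¹ hbinv)).2 B (by rw [hval]; exact hBgt)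
    filter_upwards [hpos, eventually_ge_atTop b, hratb]
    intro x hfk hxb hrx
    have hx1 : (1:ℝ) ≤ x := by linarith
    have hxb1 : (1:ℝ) ≤ x / b := (one_le_div hb0).2 hxb
    have hinvx : b⁻¹ * x = x / b := by ring
    rw [hinvx] at hrx
    have h7 := (hI (x/b) x hxb1 (by
      rw [div_le_iff₀ hb0]; nlinarith)).1
    have hfkd : 0 < fk x := hfk
    have h8 : fk (x/b) < B * fk x := (div_lt_iff₀ hfkd).1 hrx
    rw [div_lt_iff₀ hfkd]
    have hxx : x - x/b = x*(b-1)/b := by field_simp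
    rw [hxx] at h7
    have hx0 : (0:ℝ) < x := by linarith
    have hBm : B - 1 = m*(b-1)/b := by rw [hB]; ring
    -- (x*(b-1)/b) * u x ≤ fk (x/b) - fk x < (B-1) * fk x = (m*(b-1)/b) * fk x
    have h9 : (x*(b-1)/b) * u x < (m*(b-1)/b) * fk x := by
      calc (x*(b-1)/b) * u x ≤ fk (x/b) - fk x := h7
        _ < (B - 1) * fk x := by nlinarith
        _ = (m*(b-1)/b) * fk x := by rw [hBm]
    have hb1' : (0:ℝ) < b - 1 := by linarith
    have := mul_lt_mul_of_pos_right h9 (by positivity : (0:ℝ) < b / (b-1))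
    calc x * u x = ((x*(b-1)/b) * u x) * (b/(b-1)) := by field_simp
      _ < ((m*(b-1)/b) * fk x) * (b/(b-1)) := this
      _ = m * fk x := by field_simp

theorem dmonotone_regvar_derivative_asymptotics
    (d : ℕ) (hd : 2 ≤ d) (ψ g : ℝ → ℝ) (α : ℝ) (hα : 0 < α)
    (hψ0 : ψ 0 = 1) (hψ_lim : Tendsto ψ atTop (nhds 0))
    (hsmooth : ∀ x > (0:ℝ), ContDiffAt ℝ (↑(d - 2)) ψ x)
    (hsign : ∀ k ≤ d - 2, ∀ x > (0:ℝ), 0 ≤ (-1 : ℝ) ^ k * iteratedDeriv k ψ x)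
    (hanti : AntitoneOn (fun x => (-1 : ℝ) ^ (d - 2) * iteratedDeriv (d - 2) ψ x)
      (Set.Ioi 0))
    (hconv : ConvexOn ℝ (Set.Ioi 0)
      (fun x => (-1 : ℝ) ^ (d - 2) * iteratedDeriv (d - 2) ψ x))
    -- `g` is the right-continuous density of `ψ^{(d-2)}`
    (hg_rc : ∀ x > (0:ℝ), ContinuousWithinAt g (Set.Ici x) x)
    (hg : ∀ x > (0:ℝ), ∀ y, x ≤ y →
      iteratedDeriv (d - 2) ψ y - iteratedDeriv (d - 2) ψ x = ∫ t in x..y, g t)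
    -- ψ is regularly varying at infinity with index -α
    (hRV : ∀ c > (0:ℝ), Tendsto (fun x => ψ (c * x) / ψ x) atTop (nhds (c ^ (-α)))) :
    ∀ k < d, Tendsto
      (fun x => ((-1 : ℝ) ^ k * x ^ k *
          (if k = d - 1 then g x else iteratedDeriv k ψ x)) / ψ x)
      atTop (nhds (∏ j ∈ Finset.range k, ((j : ℝ) + α))) := by
  -- notation
  set f : ℕ → ℝ → ℝ :=
    fun k x => (-1:ℝ)^k * (if k = d-1 then g x else iteratedDeriv k ψ x) with hfdef
  -- smoothness setup
  have hsu : UniqueDiffOn ℝ (Ioi (0:ℝ)) := isOpen_Ioi.uniqueDiffOn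
  have hψC : ContDiffOn ℝ (↑(d-2)) ψ (Ioi 0) := fun x hx => (hsmooth x hx).contDiffWithinAt
  have iterEq : ∀ (n : ℕ) (x : ℝ), x ∈ Ioi (0:ℝ) →
      iteratedDerivWithin n ψ (Ioi 0) x = iteratedDeriv n ψ x := by
    intro n x hx
    rw [iteratedDerivWithin_eq_iteratedFDerivWithin, iteratedDeriv_eq_iteratedFDeriv,
      iteratedFDerivWithin_of_isOpen n isOpen_Ioi hx]
  have hDeriv : ∀ j, j + 1 ≤ d - 2 → ∀ x > (0:ℝ),
      HasDerivAt (iteratedDeriv j ψ) (iteratedDeriv (j+1) ψ x) x := by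
    intro j hj x hx
    have hdo := hψC.differentiableOn_iteratedDerivWithin (m := j)
      (by exact_mod_cast Nat.lt_of_succ_le hj) hsu
    have hdx := (hdo x hx).differentiableAt (isOpen_Ioi.mem_nhds hx)
    have hee : iteratedDerivWithin j ψ (Ioi 0) =ᶠ[𝓝 x] iteratedDeriv j ψ :=
      eventually_of_mem (isOpen_Ioi.mem_nhds hx) (fun y hy => iterEq j y hy)
    have hdx2 : DifferentiableAt ℝ (iteratedDeriv j ψ) x :=
      (Filter.EventuallyEq.differentiableAt_iff hee).1 hdx
    rw [iteratedDeriv_succ]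
    exact hdx2.hasDerivAt
  -- the key two-sided inequality
  have hKey : ∀ k, k + 1 < d → ∀ x y : ℝ, 1 ≤ x → x ≤ y →
      ((y - x) * f (k+1) y ≤ f k x - f k y ∧ f k x - f k y ≤ (y - x) * f (k+1) x) := by
    intro k hk x y hx1 hxy
    rcases eq_or_lt_of_le hxy with rfl | hxy
    · simp
    have hx0 : (0:ℝ) < x := by linarith
    have hy0 : (0:ℝ) < y := by linarith
    by_cases hcase : k = d - 2
    · -- convex case
      subst hcase
      have hne : ¬ (d - 2 = d - 1) := by omega
      have hsucc : d - 2 + 1 = d - 1 := by omega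
      have hk1 : d - 2 + 1 = d - 1 := hsucc
      set F : ℝ → ℝ := fun x => (-1:ℝ)^(d-2) * iteratedDeriv (d-2) ψ x with hF
      set h : ℝ → ℝ := fun t => (-1:ℝ)^(d-2) * g t with hh
      -- the truncated g is right-continuous everywhere hence measurable
      have hgrc' : ∀ x : ℝ, ContinuousWithinAt (fun t => g (max t 1)) (Ici x) x := by
        intro a
        rcases lt_or_ge a 1 with ha1 | ha1
        · apply ContinuousWithinAt.congr_of_eventuallyEq (f := fun _ : ℝ => g 1)
            continuousWithinAt_const
          · filter_upwards [mem_nhdsWithin_of_mem_nhds (Iio_mem_nhds ha1)] with t ht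
            simp [max_eq_right (le_of_lt (mem_Iio.1 ht))]
          · simp [max_eq_right (le_of_lt ha1)]
        · apply ContinuousWithinAt.congr_of_eventuallyEq (f := g)
            (hg_rc a (by linarith))
          · filter_upwards [self_mem_nhdsWithin] with t ht
            simp [max_eq_left (le_trans ha1 ht)]
          · simp [max_eq_left ha1]
      have hgmeas : Measurable (fun t => g (max t 1)) := measurable_of_rightCont _ hgrc'
      have hmeas' : Measurable (fun t => h (max t 1)) := by
        simpa [hh] using hgmeas.const_mul ((-1:ℝ)^(d-2))
      have hA : ∀ a : ℝ, 1 ≤ a →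
          Tendsto (fun t => (F t - F a)/(t - a)) (𝓝[>] a) (𝓝 (h a)) := by
        intro a ha
        apply slope_tendsto_of_rc h F a ha hmeas'
        · exact (hg_rc a (by linarith)).const_mul _
        · intro y hy
          have := hg a (by linarith) y hy
          simp only [hF, hh]
          rw [← mul_sub, this, intervalIntegral.integral_const_mul]
      have hyx : (0:ℝ) < y - x := by linarith
      -- slope bounds
      have claim1 : h x ≤ (F y - F x)/(y - x) := by
        apply le_of_tendsto (hA x hx1)
        filter_upwards [Ioo_mem_nhdsGT hxy] with t ht
        exact hconv.secant_mono (mem_Ioi.2 hx0) (mem_Ioi.2 (by linarith [ht.1] : (0:ℝ) < t))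
          (mem_Ioi.2 hy0) (ne_of_gt ht.1) (ne_of_gt hxy) (le_of_lt ht.2)
      have claim2 : (F y - F x)/(y - x) ≤ h y := by
        have heq : (F x - F y)/(x - y) = (F y - F x)/(y - x) := by
          rw [← neg_sub (F y) (F x), ← neg_sub y x, neg_div_neg_eq]
        apply ge_of_tendsto (hA y (by linarith))
        filter_upwards [self_mem_nhdsWithin] with t ht
        rw [← heq]
        exact hconv.secant_mono (mem_Ioi.2 hy0) (mem_Ioi.2 hx0)
          (mem_Ioi.2 (by linarith [mem_Ioi.1 ht] : (0:ℝ) < t)) (ne_of_lt hxy)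
          (ne_of_gt (mem_Ioi.1 ht)) (by linarith [mem_Ioi.1 ht])
      have hb1 : h x * (y - x) ≤ F y - F x := by
        rw [← le_div_iff₀ hyx]; exact claim1
      have hb2 : F y - F x ≤ h y * (y - x) := by
        rw [← div_le_iff₀ hyx]; exact claim2
      -- translate back
      have hfd2 : ∀ t, f (d-2) t = F t := by
        intro t; simp only [hfdef, hF, if_neg hne]
      have hfd1 : ∀ t, f (d-2+1) t = -h t := by
        intro t
        simp only [hfdef, hh, hk1, if_pos rfl, if_true]
        rw [show d - 1 = (d-2) + 1 from hsucc.symm, pow_succ]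
        ring
      rw [hfd2, hfd2, hfd1, hfd1]
      constructor <;> nlinarith
    · -- MVT case : k < d - 2
      have hklt : k + 1 ≤ d - 2 := by omega
      have hne1 : ¬ (k = d - 1) := by omega
      have hne2 : ¬ (k + 1 = d - 1) := by omega
      have hderf : ∀ t ∈ Ioo x y, HasDerivAt (fun t => (-1:ℝ)^k * iteratedDeriv k ψ t)
          ((-1:ℝ)^k * iteratedDeriv (k+1) ψ t) t := by
        intro t ht
        exact (hDeriv k hklt t (by linarith [ht.1])).const_mul _
      have hcontf : ContinuousOn (fun t => (-1:ℝ)^k * iteratedDeriv k ψ t) (Icc x y) := by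
        intro t ht
        exact (((hDeriv k hklt t (by linarith [ht.1])).const_mul
          ((-1:ℝ)^k)).continuousAt).continuousWithinAt
      obtain ⟨ξ, hξ, hξeq⟩ := exists_hasDerivAt_eq_slope
        (fun t => (-1:ℝ)^k * iteratedDeriv k ψ t) (fun t => (-1:ℝ)^k * iteratedDeriv (k+1) ψ t)
        hxy hcontf hderf
      -- f k x - f k y = (y - x) * f (k+1) ξ
      have hmain : f k x - f k y = (y - x) * f (k+1) ξ := by
        simp only [hfdef, if_neg hne1, if_neg hne2]
        have h2 : (-1:ℝ)^k * iteratedDeriv (k+1) ψ ξ =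
            ((-1:ℝ)^k * iteratedDeriv k ψ y - (-1:ℝ)^k * iteratedDeriv k ψ x)/(y - x) := hξeq
        have hyx : (0:ℝ) < y - x := by linarith
        have h3 := (div_eq_iff (ne_of_gt hyx)).1 h2.symm
        rw [pow_succ]
        nlinarith [h3]
      -- antitonicity of f (k+1) on Ioi 0
      have hu_anti : AntitoneOn (fun t => (-1:ℝ)^(k+1) * iteratedDeriv (k+1) ψ t) (Ioi 0) := by
        rcases eq_or_lt_of_le hklt with heq | hlt
        · rw [heq] at *
          exact fun a ha b hb hab => by
            have := hanti ha hb hab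
            simpa [heq] using this
        · apply antitoneOn_of_deriv_nonpos (convex_Ioi 0)
          · intro t ht
            exact (((hDeriv (k+1) (by omega) t ht).const_mul
              ((-1:ℝ)^(k+1))).continuousAt).continuousWithinAt
          · intro t ht
            rw [interior_Ioi] at ht
            exact (((hDeriv (k+1) (by omega) t ht).const_mul
              ((-1:ℝ)^(k+1))).differentiableAt).differentiableWithinAt
          · intro t ht
            rw [interior_Ioi] at ht
            have hd' := ((hDeriv (k+1) (by omega) t ht).const_mul ((-1:ℝ)^(k+1))).deriv
            rw [hd']
            have hs := hsign (k+2) (by omega) t ht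
            have : (-1:ℝ)^(k+1) * iteratedDeriv (k+1+1) ψ t
                = -((-1:ℝ)^(k+2) * iteratedDeriv (k+2) ψ t) := by
              rw [show k+2 = (k+1)+1 from rfl, pow_succ]
              ring
            rw [this]
            linarith
      have hξx : x < ξ := hξ.1
      have hξy : ξ < y := hξ.2
      have hu1 : f (k+1) y ≤ f (k+1) ξ := by
        simp only [hfdef, if_neg hne2]
        exact hu_anti (mem_Ioi.2 (by linarith)) (mem_Ioi.2 hy0) (le_of_lt hξy)
      have hu2 : f (k+1) ξ ≤ f (k+1) x := by
        simp only [hfdef, if_neg hne2]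
        exact hu_anti (mem_Ioi.2 hx0) (mem_Ioi.2 (by linarith)) (le_of_lt hξx)
      constructor
      · rw [hmain]; nlinarith
      · rw [hmain]; nlinarith
  -- positivity of ψ eventually
  have hψpos : ∀ᶠ x in atTop, 0 < ψ x := by
    have h2 := (tendsto_order.1 (hRV 2 two_pos)).1 0 (Real.rpow_pos_of_pos two_pos _)
    filter_upwards [h2, eventually_gt_atTop (0:ℝ)] with x hr hx0
    have hne : ψ x ≠ 0 := by
      intro h0
      rw [h0, div_zero] at hr
      exact lt_irrefl 0 hr
    have hge : 0 ≤ ψ x := by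
      have := hsign 0 (by omega) x hx0
      simpa using this
    exact lt_of_le_of_ne hge (Ne.symm hne)
  -- main induction
  have main : ∀ k, k < d →
      Tendsto (fun x => x ^ k * f k x / ψ x) atTop (𝓝 (∏ j ∈ Finset.range k, ((j:ℝ)+α))) := by
    intro k
    induction k with
    | zero =>
      intro _
      rw [Finset.prod_range_zero]
      apply Tendsto.congr' _ tendsto_const_nhds
      filter_upwards [hψpos] with x hψx
      have hne0 : ¬ ((0:ℕ) = d - 1) := by omega
      simp [hfdef, if_neg hne0, div_self (ne_of_gt hψx)]
    | succ n ih =>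
      intro hk
      have ihn := ih (by omega)
      have hcn : (0:ℝ) < ∏ j ∈ Finset.range n, ((j:ℝ)+α) :=
        Finset.prod_pos (fun j _ => by positivity)
      set cn : ℝ := ∏ j ∈ Finset.range n, ((j:ℝ)+α) with hcn'
      have hβ : (0:ℝ) < α + n := by positivity
      -- eventual positivity of f n
      have hfnpos : ∀ᶠ x in atTop, 0 < f n x := by
        filter_upwards [hψpos, (tendsto_order.1 ihn).1 0 hcn, eventually_gt_atTop (0:ℝ)]
          with x hψx hq hx0
        rcases div_pos_iff.1 hq with ⟨hnum, _⟩ | ⟨_, hden⟩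
        · rcases mul_pos_iff.1 hnum with ⟨_, hf⟩ | ⟨hxn, _⟩
          · exact hf
          · exact absurd (pow_pos hx0 n) (not_lt.2 (le_of_lt hxn))
        · linarith
      -- ratio limit for f n
      have hrat : ∀ c : ℝ, 0 < c →
          Tendsto (fun x => f n (c * x) / f n x) atTop (𝓝 (c ^ (-(α + (n:ℝ))))) := by
        intro c hc
        have hcx : Tendsto (fun x : ℝ => c * x) atTop atTop :=
          Tendsto.const_mul_atTop hc tendsto_id
        have ihc : Tendsto (fun x => (c*x) ^ n * f n (c*x) / ψ (c*x)) atTop (𝓝 cn) :=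
          ihn.comp hcx
        have hT : Tendsto (fun x => ((c*x) ^ n * f n (c*x) / ψ (c*x)) * (ψ (c*x)/ψ x)
            / ((x ^ n * f n x / ψ x) * c^n)) atTop
            (𝓝 ((cn * c ^ (-α)) / (cn * c^n))) := by
          exact (ihc.mul (hRV c hc)).div (ihn.mul_const _)
            (by positivity)
        have hval : (cn * c ^ (-α)) / (cn * c^n) = c ^ (-(α + (n:ℝ))) := by
          rw [neg_add, Real.rpow_add hc, Real.rpow_neg hc.le ((n:ℝ)), Real.rpow_natCast]
          field_simp
        rw [hval] at hT
        apply Tendsto.congr' _ hT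
        filter_upwards [hψpos, hcx.eventually hψpos, hfnpos, eventually_gt_atTop (0:ℝ)]
          with x hψx hψcx hfn hx0
        have hxn : (0:ℝ) < x ^ n := pow_pos hx0 n
        have hcn0 : (0:ℝ) < c ^ n := pow_pos hc n
        field_simp
        ring
      -- monotone density
      have hI : ∀ x y : ℝ, 1 ≤ x → x ≤ y →
          (y - x) * f (n+1) y ≤ f n x - f n y ∧ f n x - f n y ≤ (y - x) * f (n+1) x :=
        fun x y hx hxy => hKey n hk x y hx hxy
      have hr := monotone_density_core (f n) (f (n+1)) (α + n) hβ hI hfnpos hrat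
      -- combine
      have hcomb := hr.mul ihn
      rw [Finset.prod_range_succ]
      have : (α + (n:ℝ)) * cn = cn * ((n:ℝ) + α) := by ring
      rw [this] at hcomb
      apply Tendsto.congr' _ hcomb
      filter_upwards [hψpos, hfnpos] with x hψx hfn
      field_simp
      ring
  -- conclude
  intro k hk
  apply Tendsto.congr _ (main k hk)
  intro x
  simp only [hfdef]
  ring
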